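/- Let k be a field, n ≥ 1, and let P be the 'nested vertical diamonds' poset with underlying set {s, u_1, …, u_n, t} and order relations s < u_i < t for all i = 1, …, n, the elements u_1, …, u_n being pairwise incomparable. Then the incidence R-ring k^a[P] is Koszul. -/

import Mathlib

noncomputable section
open MulOpposite
open scoped DirectSum

namespace P1605

--CHUNK_G_BEGIN
section GradedRings

variable (R : Type) [Ring R]

/-- A connected graded `R`-ring: a ring `A` together with an `ℕ`-grading by additive
subgroups whose degree-zero part is a copy of `R` (via `emb`), with the multiplicative
grading property.  The (unique) augmentation `A → R` is part of the data. -/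
structure GRing (A : Type) [Ring A] where
  emb : R →+* A
  aug : A →+* R
  deg : ℕ → AddSubgroup A
  internal : DirectSum.IsInternal deg
  emb_mem : ∀ r : R, emb r ∈ deg 0
  emb_surj : ∀ x ∈ deg 0, ∃ r : R, emb r = x
  emb_inj : Function.Injective emb
  mul_mem : ∀ {p q : ℕ} {x y : A}, x ∈ deg p → y ∈ deg q → x * y ∈ deg (p + q)
  aug_emb : ∀ r : R, aug (emb r) = r
  aug_deg : ∀ (n : ℕ), ∀ x ∈ deg (n + 1), aug x = 0

variable {R}

/-- A connected graded ring is strongly graded when every multiplication map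
`A_p ⊗ A_q → A_{p+q}` is surjective, i.e. each element of `A_{p+q}` is a sum of
products of elements of degrees `p` and `q`. -/
def GRing.StronglyGraded {A : Type} [Ring A] (G : GRing R A) : Prop :=
  ∀ p q : ℕ, ∀ z ∈ G.deg (p + q),
    z ∈ AddSubgroup.closure {w : A | ∃ x ∈ G.deg p, ∃ y ∈ G.deg q, w = x * y}

/-- A grading, compatible with a graded ring `G`, on an `A`-module `M`. -/
structure GMod {A : Type} [Ring A] (G : GRing R A) (M : Type) [AddCommGroup M]
    [Module A M] where
  deg : ℕ → AddSubgroup M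
  internal : DirectSum.IsInternal deg
  smul_mem : ∀ {p d : ℕ} {a : A} {x : M}, a ∈ G.deg p → x ∈ deg d → a • x ∈ deg (p + d)

/-- A resolution of `R` by projective graded left `A`-modules, in which the `n`-th
module is generated by its homogeneous component of degree `n`.  Existence of such a
resolution is the definition of Koszulity. -/
structure KResolution {A : Type} [Ring A] (G : GRing R A) where
  P : ℕ → Type
  [acg : ∀ n, AddCommGroup (P n)]
  [mod : ∀ n, Module A (P n)]
  proj : ∀ n, Module.Projective A (P n)
  g : ∀ n, ℕ → AddSubgroup (P n)
  internal : ∀ n, DirectSum.IsInternal (g n)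
  smul_mem : ∀ (n : ℕ) {p d : ℕ} {a : A} {x : P n},
    a ∈ G.deg p → x ∈ g n d → a • x ∈ g n (p + d)
  f : ∀ n, P (n + 1) →+ P n
  f_linear : ∀ (n : ℕ) (a : A) (x : P (n + 1)), f n (a • x) = a • f n x
  f_graded : ∀ (n d : ℕ), ∀ x ∈ g (n + 1) d, f n x ∈ g n d
  eps : P 0 →+ R
  eps_linear : ∀ (a : A) (x : P 0), eps (a • x) = G.aug a * eps x
  eps_surj : Function.Surjective eps
  eps_graded : ∀ (d : ℕ), ∀ x ∈ g 0 (d + 1), eps x = 0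
  comp0 : ∀ x : P 1, eps (f 0 x) = 0
  exact0 : ∀ x : P 0, eps x = 0 → x ∈ Set.range (f 0)
  comp : ∀ (n : ℕ) (x : P (n + 2)), f n (f (n + 1) x) = 0
  exact : ∀ (n : ℕ) (x : P (n + 1)), f n x = 0 → x ∈ Set.range (f (n + 1))
  gen : ∀ (n : ℕ) (x : P n),
    x ∈ AddSubgroup.closure {z : P n | ∃ (a : A), ∃ y ∈ g n n, z = a • y}

/-- A connected graded `R`-ring is Koszul if `R` admits a resolution by projective
graded left `A`-modules such that the `n`-th module is generated in degree `n`. -/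
def GRing.IsKoszul {A : Type} [Ring A] (G : GRing R A) : Prop :=
  Nonempty (KResolution G)

end GradedRings
--CHUNK_G_END

--CHUNK_P_BEGIN
section Posets

variable (k : Type) [Field k] (P : Type) [PartialOrder P]

/-- `ρ` is a length function for the graded poset `P`: every interval `[x, y]`
contains a maximal chain (a saturated chain for the covering relation `⋖`), and
every maximal chain from `x` to `y` has the same length `ρ x y`. -/
structure LengthFn {P : Type} [PartialOrder P] (ρ : P → P → ℕ) : Prop where
  exists_chain : ∀ x y : P, x ≤ y → ∃ c : List P,
    c.Chain' (· ⋖ ·) ∧ c.head? = some x ∧ c.getLast? = some y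
  chain_length : ∀ (x y : P) (c : List P),
    c.Chain' (· ⋖ ·) → c.head? = some x → c.getLast? = some y →
    c.length = ρ x y + 1

/-- `A`, together with the family `e`, is (a copy of) the incidence algebra of the
finite poset `P` over the field `k`: the elements `e x y`, for `x ≤ y`, form a
`k`-basis of `A` and multiply by `e x y * e z w = δ_{y z} · e x w`; the identity
is `∑ₓ e x x`. -/
structure IncAlg [Fintype P] [DecidableEq P] (A : Type) [Ring A] [Algebra k A] where
  e : P → P → A
  e_not_le : ∀ x y : P, ¬ x ≤ y → e x y = 0
  e_mul : ∀ x y z w : P, x ≤ y → z ≤ w →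
    e x y * e z w = if y = z then e x w else 0
  indep : LinearIndependent k (fun p : {p : P × P // p.1 ≤ p.2} => e p.1.1 p.1.2)
  span_top : Submodule.span k
    (Set.range (fun p : {p : P × P // p.1 ≤ p.2} => e p.1.1 p.1.2)) = ⊤
  one_def : (1 : A) = ∑ x : P, e x x

variable {k P}

/-- The canonical structure of connected graded `R`-ring (`R = k^P`) on the
incidence algebra of a finite graded poset: `e x y` is homogeneous of degree
`l([x,y]) = ρ x y`, the degree-zero part is `R` embedded diagonally, and the
augmentation kills all `e x y` with `x ≠ y`. -/
structure IncGrading [Fintype P] [DecidableEq P] {A : Type} [Ring A] [Algebra k A]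
    (inc : IncAlg k P A) (ρ : P → P → ℕ) (G : GRing (P → k) A) : Prop where
  emb_eq : ∀ f : P → k, G.emb f = ∑ x : P, f x • inc.e x x
  deg_eq : ∀ d : ℕ, (G.deg d : Set A) =
    ↑(Submodule.span k {a : A | ∃ x y : P, x ≤ y ∧ ρ x y = d ∧ a = inc.e x y})
  aug_eq : ∀ x y : P, x ≤ y →
    G.aug (inc.e x y) = if x = y then Pi.single x (1 : k) else 0

end Posets
--CHUNK_P_END


/-- The "nested vertical diamonds" poset on `{s, u_1, …, u_n, t}` with
`s < u_i < t` for all `i`, the `u_i` being pairwise incomparable. -/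
inductive VD (n : ℕ) : Type
  | s | u (i : Fin n) | t
deriving DecidableEq, Fintype

namespace VD

variable {n : ℕ}

/-- The order relation of the nested vertical diamonds poset. -/
def le : VD n → VD n → Prop
  | .s, _ => True
  | .u i, .u j => i = j
  | .u _, .t => True
  | .t, .t => True
  | _, _ => False

instance : PartialOrder (VD n) where
  le := le
  le_refl a := by cases a <;> simp [le]
  le_trans a b c hab hbc := by
    cases a <;> cases b <;> cases c <;> simp_all [le]
  le_antisymm a b hab hba := by
    cases a <;> cases b <;> simp_all [le]

end VD


----------------------------------------------------------------
-- Auxiliary development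
----------------------------------------------------------------

namespace VD
variable {n : ℕ}

instance : DecidableRel ((· ≤ ·) : VD n → VD n → Prop) := fun a b =>
  match a, b with
  | .s, _ => .isTrue trivial
  | .u i, .u j => decidable_of_iff (i = j) Iff.rfl
  | .u _, .t => .isTrue trivial
  | .t, .t => .isTrue trivial
  | .u _, .s => .isFalse id
  | .t, .s => .isFalse id
  | .t, .u _ => .isFalse id

@[simp] lemma s_le (x : VD n) : (s : VD n) ≤ x := trivial
@[simp] lemma le_t (x : VD n) : x ≤ (t : VD n) := by cases x <;> trivial
@[simp] lemma u_le_u {i j : Fin n} : (u i : VD n) ≤ u j ↔ i = j := Iff.rfl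
@[simp] lemma not_u_le_s (i : Fin n) : ¬ (u i : VD n) ≤ s := id
@[simp] lemma not_t_le_s : ¬ (t : VD n) ≤ s := id
@[simp] lemma not_t_le_u (i : Fin n) : ¬ (t : VD n) ≤ u i := id

lemma le_s_iff {x : VD n} : x ≤ s ↔ x = s := by cases x <;> simp
lemma t_le_iff {x : VD n} : t ≤ x ↔ x = t := by cases x <;> simp
lemma le_u_iff {x : VD n} {i : Fin n} : x ≤ u i ↔ x = s ∨ x = u i := by
  cases x <;> simp
lemma u_le_iff {x : VD n} {i : Fin n} : u i ≤ x ↔ x = u i ∨ x = t := by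
  cases x <;> simp [eq_comm]

lemma s_covBy_u (i : Fin n) : (s : VD n) ⋖ u i := by
  constructor
  · exact lt_of_le_of_ne (s_le _) (by simp)
  · intro c hc hc2
    rcases le_u_iff.mp hc2.le with rfl | rfl
    · exact lt_irrefl _ hc
    · exact lt_irrefl _ hc2

lemma u_covBy_t (i : Fin n) : (u i : VD n) ⋖ t := by
  constructor
  · exact lt_of_le_of_ne (le_t _) (by simp)
  · intro c hc hc2
    rcases u_le_iff.mp hc.le with rfl | rfl
    · exact lt_irrefl _ hc
    · exact lt_irrefl _ hc2

variable {ρ : VD n → VD n → ℕ} (hρ : LengthFn ρ)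

include hρ

lemma rho_refl (x : VD n) : ρ x x = 0 := by
  have := hρ.chain_length x x [x] (by simp [List.Chain']) (by simp) (by simp)
  simpa using this.symm

lemma rho_s_u (i : Fin n) : ρ (s : VD n) (u i) = 1 := by
  have := hρ.chain_length s (u i) [s, u i]
    (by simp [List.Chain', List.isChain_cons_cons, s_covBy_u]) (by simp) (by simp)
  simpa using this.symm

lemma rho_u_t (i : Fin n) : ρ (u i : VD n) t = 1 := by
  have := hρ.chain_length (u i) t [u i, t]
    (by simp [List.Chain', List.isChain_cons_cons, u_covBy_t]) (by simp) (by simp)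
  simpa using this.symm

lemma rho_s_t (hn : 0 < n) : ρ (s : VD n) t = 2 := by
  have := hρ.chain_length s t [s, u ⟨0, hn⟩, t]
    (by simp [List.Chain', List.isChain_cons_cons, s_covBy_u, u_covBy_t]) (by simp) (by simp)
  simpa using this.symm

/-- classification of pairs by ρ value -/
lemma rho_classify (hn : 0 < n) {x y : VD n} (h : x ≤ y) :
    (x = y ∧ ρ x y = 0) ∨ (∃ i, x = s ∧ y = u i ∧ ρ x y = 1) ∨
    (∃ i, x = u i ∧ y = t ∧ ρ x y = 1) ∨ (x = s ∧ y = t ∧ ρ x y = 2) := by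
  cases x <;> cases y <;> simp_all [rho_refl hρ, rho_s_u hρ, rho_u_t hρ, rho_s_t hρ hn]

end VD

section IncAlgLemmas

variable {k : Type} [Field k] {n : ℕ} {A : Type} [Ring A] [Algebra k A]
  (inc : IncAlg k (VD n) A)

/-- index type for the basis of the incidence algebra -/
abbrev Pairs (n : ℕ) : Type := {p : VD n × VD n // p.1 ≤ p.2}

/-- the basis of the incidence algebra -/
def bA : Module.Basis (Pairs n) k A := Module.Basis.mk inc.indep (by rw [inc.span_top])

@[simp] lemma bA_apply (p : Pairs n) : bA inc p = inc.e p.1.1 p.1.2 := by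
  simp [bA]

lemma indep_fam {ι : Type} [Fintype ι] (p : ι → Pairs n) (hp : Function.Injective p)
    {c : ι → k} (h : ∑ i, c i • inc.e (p i).1.1 (p i).1.2 = 0) : ∀ i, c i = 0 := by
  have h2 := (bA inc).linearIndependent.comp p hp
  rw [Fintype.linearIndependent_iff] at h2
  exact h2 c (by simpa using h)

lemma E_ne_zero {x y : VD n} (h : x ≤ y) : inc.e x y ≠ 0 := by
  have := (bA inc).linearIndependent.ne_zero ⟨(x, y), h⟩
  simpa using this

lemma mem_span_basis (a : A) :
    a ∈ Submodule.span k (Set.range fun p : Pairs n => inc.e p.1.1 p.1.2) := by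
  rw [inc.span_top]; trivial

lemma mul_e_ss (a : A) : ∃ c : k, a * inc.e VD.s VD.s = c • inc.e VD.s VD.s := by
  induction mem_span_basis inc a using Submodule.span_induction with
  | mem w hw =>
    obtain ⟨⟨⟨x, y⟩, hxy⟩, rfl⟩ := hw
    replace hxy : x ≤ y := hxy
    simp only
    rw [inc.e_mul x y VD.s VD.s hxy (le_refl _)]
    rcases eq_or_ne y VD.s with rfl | hy
    · rw [VD.le_s_iff.mp hxy]
      exact ⟨1, by simp⟩
    · exact ⟨0, by simp [hy]⟩
  | zero => exact ⟨0, by simp⟩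
  | add w₁ w₂ _ _ ih₁ ih₂ =>
    obtain ⟨c₁, h₁⟩ := ih₁; obtain ⟨c₂, h₂⟩ := ih₂
    exact ⟨c₁ + c₂, by rw [add_mul, h₁, h₂, add_smul]⟩
  | smul c w _ ih =>
    obtain ⟨c', h'⟩ := ih
    exact ⟨c * c', by rw [smul_mul_assoc, h', smul_smul]⟩

lemma mul_e_uu (i : Fin n) (a : A) : ∃ c d : k,
    a * inc.e (VD.u i) (VD.u i) = c • inc.e (VD.u i) (VD.u i) + d • inc.e VD.s (VD.u i) := by
  induction mem_span_basis inc a using Submodule.span_induction with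
  | mem w hw =>
    obtain ⟨⟨⟨x, y⟩, hxy⟩, rfl⟩ := hw
    replace hxy : x ≤ y := hxy
    simp only
    rw [inc.e_mul x y (VD.u i) (VD.u i) hxy (le_refl _)]
    rcases eq_or_ne y (VD.u i) with rfl | hy
    · rcases VD.le_u_iff.mp hxy with rfl | rfl
      · exact ⟨0, 1, by simp⟩
      · exact ⟨1, 0, by simp⟩
    · exact ⟨0, 0, by simp [hy]⟩
  | zero => exact ⟨0, 0, by simp⟩
  | add w₁ w₂ _ _ ih₁ ih₂ =>
    obtain ⟨c₁, d₁, h₁⟩ := ih₁; obtain ⟨c₂, d₂, h₂⟩ := ih₂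
    refine ⟨c₁ + c₂, d₁ + d₂, ?_⟩
    rw [add_mul, h₁, h₂, add_smul, add_smul]; abel
  | smul c w _ ih =>
    obtain ⟨c', d', h'⟩ := ih
    exact ⟨c * c', c * d', by rw [smul_mul_assoc, h', smul_add, smul_smul, smul_smul]⟩

end IncAlgLemmas

section GradingLemmas

variable {k : Type} [Field k] {n : ℕ} {A : Type} [Ring A] [Algebra k A]
  {inc : IncAlg k (VD n) A} {ρ : VD n → VD n → ℕ}
  {GA : GRing (VD n → k) A} (hGA : IncGrading inc ρ GA)

include hGA

lemma mem_deg_iff {d : ℕ} {z : A} : z ∈ GA.deg d ↔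
    z ∈ Submodule.span k {a : A | ∃ x y : VD n, x ≤ y ∧ ρ x y = d ∧ a = inc.e x y} := by
  rw [← SetLike.mem_coe, hGA.deg_eq d, SetLike.mem_coe]

lemma E_mem_deg {x y : VD n} (h : x ≤ y) : inc.e x y ∈ GA.deg (ρ x y) :=
  (mem_deg_iff hGA).mpr (Submodule.subset_span ⟨x, y, h, rfl, rfl⟩)

lemma deg_smul_mem {d : ℕ} {c : k} {z : A} (hz : z ∈ GA.deg d) :
    c • z ∈ GA.deg d :=
  (mem_deg_iff hGA).mpr (Submodule.smul_mem _ c ((mem_deg_iff hGA).mp hz))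

lemma one_mem_deg0 (hρ : LengthFn ρ) : (1 : A) ∈ GA.deg 0 := by
  rw [inc.one_def]
  refine AddSubgroup.sum_mem _ fun x _ => ?_
  simpa [VD.rho_refl hρ x] using E_mem_deg hGA (le_refl x)

lemma emb_single (x : VD n) : GA.emb (Pi.single x 1) = inc.e x x := by
  rw [hGA.emb_eq]
  rw [Finset.sum_eq_single x (fun b _ hb => by
    rw [Pi.single_eq_of_ne hb]; simp) (by simp)]
  simp

lemma algebraMap_eq_emb (c : k) : algebraMap k A c = GA.emb (fun _ => c) := by
  rw [hGA.emb_eq, Algebra.algebraMap_eq_smul_one, inc.one_def, Finset.smul_sum]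

lemma emb_smul (c : k) (r : VD n → k) : GA.emb (c • r) = c • GA.emb r := by
  rw [hGA.emb_eq, hGA.emb_eq, Finset.smul_sum]
  refine Finset.sum_congr rfl fun x _ => ?_
  rw [smul_smul]
  rfl

lemma aug_smul (c : k) (z : A) : GA.aug (c • z) = c • GA.aug z := by
  rw [Algebra.smul_def, map_mul, algebraMap_eq_emb hGA, GA.aug_emb]
  funext w
  simp [Pi.mul_apply]

/-- the span of the off-diagonal basis elements -/
def SOff (inc : IncAlg k (VD n) A) : Submodule k A :=
  Submodule.span k {w : A | ∃ x y : VD n, x ≤ y ∧ x ≠ y ∧ w = inc.e x y}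

lemma sub_emb_aug_mem (a : A) : a - GA.emb (GA.aug a) ∈ SOff inc := by
  induction mem_span_basis inc a using Submodule.span_induction with
  | mem w hw =>
    obtain ⟨⟨⟨x, y⟩, hxy⟩, rfl⟩ := hw
    replace hxy : x ≤ y := hxy
    simp only
    rcases eq_or_ne x y with rfl | hne
    · rw [hGA.aug_eq x x hxy, if_pos rfl, emb_single hGA]
      simpa using Submodule.zero_mem _
    · rw [hGA.aug_eq x y hxy, if_neg hne, map_zero, sub_zero]
      exact Submodule.subset_span ⟨x, y, hxy, hne, rfl⟩
  | zero => simpa using Submodule.zero_mem _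
  | add w₁ w₂ _ _ ih₁ ih₂ =>
    have : w₁ + w₂ - GA.emb (GA.aug (w₁ + w₂)) =
        (w₁ - GA.emb (GA.aug w₁)) + (w₂ - GA.emb (GA.aug w₂)) := by
      rw [map_add, map_add]; abel
    rw [this]; exact Submodule.add_mem _ ih₁ ih₂
  | smul c w _ ih =>
    have : c • w - GA.emb (GA.aug (c • w)) = c • (w - GA.emb (GA.aug w)) := by
      rw [aug_smul hGA, emb_smul hGA, smul_sub]
    rw [this]; exact Submodule.smul_mem _ _ ih

lemma aug_eq_zero_mem_SOff {a : A} (ha : GA.aug a = 0) : a ∈ SOff inc := by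
  have := sub_emb_aug_mem hGA a
  rwa [ha, map_zero, sub_zero] at this

end GradingLemmas

section InternalBasis

/-- a grading defined by partitioning a basis is internal -/
lemma internal_of_basis {k M ι : Type} [Field k] [AddCommGroup M] [Module k M]
    (b : Module.Basis ι k M) (dg : ι → ℕ) :
    DirectSum.IsInternal (fun d => Submodule.span k (b '' {i | dg i = d})) := by
  rw [DirectSum.isInternal_submodule_iff_iSupIndep_and_iSup_eq_top]
  constructor
  · intro d
    rw [disjoint_iff]
    have : (⨆ d' ≠ d, Submodule.span k (b '' {i | dg i = d'})) =
        Submodule.span k (b '' ⋃ d' ≠ d, {i | dg i = d'}) := by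
      simp_rw [Set.image_iUnion, Submodule.span_iUnion]
    rw [this, disjoint_iff.mp (b.linearIndependent.disjoint_span_image ?_)]
    rw [Set.disjoint_left]; rintro i (rfl : dg i = d); simp
  · rw [← Submodule.span_iUnion, eq_top_iff, ← b.span_eq, Submodule.span_le]
    rintro x ⟨i, rfl⟩
    apply Submodule.subset_span
    exact Set.mem_iUnion.mpr ⟨dg i, Set.mem_image_of_mem b rfl⟩

lemma internal_addSubgroup_of_basis {k M ι : Type} [Field k] [AddCommGroup M]
    [Module k M] (b : Module.Basis ι k M) (dg : ι → ℕ) :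
    DirectSum.IsInternal
      (fun d => (Submodule.span k (b '' {i | dg i = d})).toAddSubgroup) :=
  internal_of_basis b dg

end InternalBasis

section Modules

variable {k : Type} [Field k] {m : ℕ} {A : Type} [Ring A] [Algebra k A]
  (inc : IncAlg k (VD (m+1)) A)

/-- the left ideal generated by `e s s` -/
def Ls : Submodule A A := Submodule.span A {inc.e VD.s VD.s}

/-- the left ideal generated by `e (u i) (u i)` -/
def Lu (i : Fin (m+1)) : Submodule A A := Submodule.span A {inc.e (VD.u i) (VD.u i)}

/-- first syzygy module -/
def M1 : Submodule A ((Fin (m+1) ⊕ Fin (m+1)) → A) :=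
  Submodule.pi Set.univ (Sum.elim (fun _ => Ls inc) (fun i => Lu inc i))

/-- second syzygy module -/
def M2 : Submodule A (Fin m → A) :=
  Submodule.pi Set.univ (fun _ => Ls inc)

lemma single_mem_pi {ι : Type} [DecidableEq ι] {N : ι → Type}
    [∀ i, AddCommGroup (N i)] [∀ i, Module A (N i)] (p : ∀ i, Submodule A (N i))
    (j : ι) {v : N j} (hv : v ∈ p j) : Pi.single j v ∈ Submodule.pi Set.univ p := by
  intro j' _
  rcases eq_or_ne j' j with rfl | hne
  · rwa [Pi.single_eq_same]
  · rw [Pi.single_eq_of_ne hne]; exact Submodule.zero_mem _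

lemma e_ss_mem_Ls : inc.e VD.s VD.s ∈ Ls inc := Submodule.subset_span rfl

lemma e_uu_mem_Lu (i : Fin (m+1)) : inc.e (VD.u i) (VD.u i) ∈ Lu inc i :=
  Submodule.subset_span rfl

lemma mul_e_ss_mem_Ls (a : A) : a * inc.e VD.s VD.s ∈ Ls inc :=
  Submodule.mem_span_singleton.mpr ⟨a, rfl⟩

lemma mul_e_uu_mem_Lu (a : A) (i : Fin (m+1)) :
    a * inc.e (VD.u i) (VD.u i) ∈ Lu inc i :=
  Submodule.mem_span_singleton.mpr ⟨a, rfl⟩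

lemma e_su_mem_Lu (i : Fin (m+1)) : inc.e VD.s (VD.u i) ∈ Lu inc i := by
  have : inc.e VD.s (VD.u i) = inc.e VD.s (VD.u i) * inc.e (VD.u i) (VD.u i) := by
    rw [inc.e_mul _ _ _ _ (by simp) (le_refl _), if_pos rfl]
  rw [this]
  exact mul_e_uu_mem_Lu inc _ i

lemma mem_Ls_iff {w : A} : w ∈ Ls inc ↔ ∃ c : k, w = c • inc.e VD.s VD.s := by
  constructor
  · intro hw
    obtain ⟨a, rfl⟩ := Submodule.mem_span_singleton.mp hw
    obtain ⟨c, hc⟩ := mul_e_ss (k := k) inc a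
    exact ⟨c, by rw [← hc]; rfl⟩
  · rintro ⟨c, rfl⟩
    exact Submodule.smul_of_tower_mem _ c (e_ss_mem_Ls inc)

lemma mem_Lu_iff {w : A} {i : Fin (m+1)} : w ∈ Lu inc i ↔
    ∃ c d : k, w = c • inc.e (VD.u i) (VD.u i) + d • inc.e VD.s (VD.u i) := by
  constructor
  · intro hw
    obtain ⟨a, rfl⟩ := Submodule.mem_span_singleton.mp hw
    obtain ⟨c, d, hc⟩ := mul_e_uu (k := k) inc i a
    exact ⟨c, d, by rw [← hc]; rfl⟩
  · rintro ⟨c, d, rfl⟩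
    exact Submodule.add_mem _
      (Submodule.smul_of_tower_mem _ c (e_uu_mem_Lu inc i))
      (Submodule.smul_of_tower_mem _ d (e_su_mem_Lu inc i))

/-- generator of the `i`-th copy of `P_s` inside `M1` -/
def Bs (i : Fin (m+1)) : M1 inc :=
  ⟨Pi.single (Sum.inl i) (inc.e VD.s VD.s),
    single_mem_pi _ _ (by exact e_ss_mem_Ls inc)⟩

/-- generator of the `i`-th copy of `P_{u i}` inside `M1` -/
def Bu (i : Fin (m+1)) : M1 inc :=
  ⟨Pi.single (Sum.inr i) (inc.e (VD.u i) (VD.u i)),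
    single_mem_pi _ _ (by exact e_uu_mem_Lu inc i)⟩

/-- the degree-two element of the `i`-th copy of `P_{u i}` inside `M1` -/
def Bsu (i : Fin (m+1)) : M1 inc :=
  ⟨Pi.single (Sum.inr i) (inc.e VD.s (VD.u i)),
    single_mem_pi _ _ (by exact e_su_mem_Lu inc i)⟩

/-- generator of the `j`-th copy of `P_s` inside `M2` -/
def CC (j : Fin m) : M2 inc :=
  ⟨Pi.single j (inc.e VD.s VD.s), single_mem_pi _ _ (by exact e_ss_mem_Ls inc)⟩

end Modules

section ModulesBasis

variable {k : Type} [Field k] {m : ℕ} {A : Type} [Ring A] [Algebra k A]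
  (inc : IncAlg k (VD (m+1)) A)

lemma M1_repr (x : M1 inc) : ∃ c c' d : Fin (m+1) → k,
    x = ∑ i, c i • Bs inc i + ∑ i, c' i • Bu inc i + ∑ i, d i • Bsu inc i := by
  have h1 : ∀ i, ∃ c : k, (x : (Fin (m+1) ⊕ Fin (m+1)) → A) (Sum.inl i) = c • inc.e VD.s VD.s :=
    fun i => (mem_Ls_iff inc).mp (Submodule.mem_pi.mp x.2 (Sum.inl i) trivial)
  have h2 : ∀ i, ∃ c d : k, (x : (Fin (m+1) ⊕ Fin (m+1)) → A) (Sum.inr i) =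
      c • inc.e (VD.u i) (VD.u i) + d • inc.e VD.s (VD.u i) :=
    fun i => (mem_Lu_iff inc).mp (Submodule.mem_pi.mp x.2 (Sum.inr i) trivial)
  choose c hc using h1
  choose c' d hcd using h2
  refine ⟨c, c', d, ?_⟩
  apply Subtype.ext
  funext j
  have : ((∑ i, c i • Bs inc i + ∑ i, c' i • Bu inc i + ∑ i, d i • Bsu inc i :
      M1 inc) : (Fin (m+1) ⊕ Fin (m+1)) → A) j
      = ∑ i, c i • Pi.single (M := fun _ : Fin (m+1) ⊕ Fin (m+1) => A) (Sum.inl i) (inc.e VD.s VD.s) j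
      + (∑ i, c' i • Pi.single (M := fun _ : Fin (m+1) ⊕ Fin (m+1) => A) (Sum.inr i) (inc.e (VD.u i) (VD.u i)) j
      + ∑ i, d i • Pi.single (M := fun _ : Fin (m+1) ⊕ Fin (m+1) => A) (Sum.inr i) (inc.e VD.s (VD.u i)) j) := by
    simp [Bs, Bu, Bsu, AddSubmonoidClass.coe_finset_sum, Finset.sum_apply, add_assoc]
  rw [this]
  rcases j with i | i
  · simp [Pi.single_apply, Finset.sum_ite_eq, hc i]
  · simp [Pi.single_apply, Finset.sum_ite_eq, hcd i]

lemma M2_repr (y : M2 inc) : ∃ c : Fin m → k, y = ∑ j, c j • CC inc j := by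
  have h1 : ∀ j, ∃ c : k, (y : Fin m → A) j = c • inc.e VD.s VD.s :=
    fun j => (mem_Ls_iff inc).mp (Submodule.mem_pi.mp y.2 j trivial)
  choose c hc using h1
  refine ⟨c, ?_⟩
  apply Subtype.ext
  funext j
  have : ((∑ j, c j • CC inc j : M2 inc) : Fin m → A) j
      = ∑ j', c j' • Pi.single (M := fun _ => A) j' (inc.e VD.s VD.s) j := by
    simp [CC, AddSubmonoidClass.coe_finset_sum, Finset.sum_apply]
  rw [this]
  simp [Pi.single_apply, Finset.sum_ite_eq, hc j]

end ModulesBasis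

section PairIndep

variable {k : Type} [Field k] {n : ℕ} {A : Type} [Ring A] [Algebra k A]
  (inc : IncAlg k (VD n) A)

lemma single_indep {x y : VD n} (h1 : x ≤ y) {a : k} (h : a • inc.e x y = 0) :
    a = 0 := by
  have := indep_fam inc (fun _ : Unit => (⟨(x, y), h1⟩ : Pairs n))
    (fun _ _ _ => rfl) (c := fun _ => a) (by simpa using h)
  exact this ()

lemma pair_indep {x y z w : VD n} (h1 : x ≤ y) (h2 : z ≤ w)
    (hne : (x, y) ≠ (z, w)) {a b : k}
    (h : a • inc.e x y + b • inc.e z w = 0) : a = 0 ∧ b = 0 := by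
  have hinj : Function.Injective (fun bb : Bool =>
      if bb then (⟨(x, y), h1⟩ : Pairs n) else ⟨(z, w), h2⟩) := by
    intro b b' hbb
    cases b <;> cases b' <;> simp_all [Subtype.ext_iff] <;>
      exact absurd hbb.symm hne <;> exact absurd hbb hne
  have := indep_fam inc _ hinj (c := fun bb : Bool => if bb then a else b)
    (by simpa [Fintype.sum_bool] using h)
  exact ⟨this true, this false⟩

end PairIndep

section Bases

variable {k : Type} [Field k] {m : ℕ} {A : Type} [Ring A] [Algebra k A]
  (inc : IncAlg k (VD (m+1)) A)

/-- index type of the basis of `M1` -/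
abbrev Iota1 (m : ℕ) : Type := Fin (m+1) ⊕ Fin (m+1) ⊕ Fin (m+1)

/-- the basis family of `M1` -/
def v1 : Iota1 m → M1 inc := Sum.elim (Bs inc) (Sum.elim (Bu inc) (Bsu inc))

/-- degrees of the basis vectors of `M1` -/
def dg1 : Iota1 m → ℕ := Sum.elim (fun _ => 1) (Sum.elim (fun _ => 1) (fun _ => 2))

lemma v1_indep : LinearIndependent k (v1 inc) := by
  apply LinearIndependent.of_comp ((M1 inc).subtype.restrictScalars k)
  rw [Fintype.linearIndependent_iff]
  intro g hg
  have hg' := congrFun hg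
  have hl : ∀ i, g (.inl i) • inc.e VD.s VD.s = 0 := by
    intro i
    have := hg' (Sum.inl i)
    simpa [v1, Bs, Bu, Bsu, Fintype.sum_sum_type, Finset.sum_apply,
      Pi.single_apply, Finset.sum_ite_eq] using this
  have hr : ∀ i, g (.inr (.inl i)) • inc.e (VD.u i) (VD.u i)
      + g (.inr (.inr i)) • inc.e VD.s (VD.u i) = 0 := by
    intro i
    have := hg' (Sum.inr i)
    simpa [v1, Bs, Bu, Bsu, Fintype.sum_sum_type, Finset.sum_apply,
      Pi.single_apply, Finset.sum_ite_eq] using this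
  intro j
  rcases j with i | i | i
  · exact single_indep inc (le_refl _) (hl i)
  · exact (pair_indep inc (le_refl _) (by simp) (by simp) (hr i)).1
  · exact (pair_indep inc (le_refl _) (by simp) (by simp) (hr i)).2

lemma v1_span : ⊤ ≤ Submodule.span k (Set.range (v1 inc)) := by
  intro x _
  obtain ⟨c, c', d, rfl⟩ := M1_repr inc x
  refine Submodule.add_mem _ (Submodule.add_mem _ ?_ ?_) ?_ <;>
    refine Submodule.sum_mem _ fun i _ => Submodule.smul_mem _ _
      (Submodule.subset_span ?_)
  · exact ⟨Sum.inl i, rfl⟩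
  · exact ⟨Sum.inr (Sum.inl i), rfl⟩
  · exact ⟨Sum.inr (Sum.inr i), rfl⟩

/-- the basis of `M1` -/
def basis1 : Module.Basis (Iota1 m) k (M1 inc) := Module.Basis.mk (v1_indep inc) (v1_span inc)

/-- the grading of `M1` -/
def W1 (d : ℕ) : Submodule k (M1 inc) :=
  Submodule.span k (v1 inc '' {j | dg1 j = d})

lemma W1_internal : DirectSum.IsInternal (fun d => (W1 inc d).toAddSubgroup) := by
  have h := internal_addSubgroup_of_basis (basis1 inc) dg1
  have : ⇑(basis1 inc) = v1 inc := Module.Basis.coe_mk _ _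
  rw [this] at h
  exact h

lemma Bs_mem_W1 (i : Fin (m+1)) : Bs inc i ∈ W1 inc 1 :=
  Submodule.subset_span ⟨Sum.inl i, rfl, rfl⟩

lemma Bu_mem_W1 (i : Fin (m+1)) : Bu inc i ∈ W1 inc 1 :=
  Submodule.subset_span ⟨Sum.inr (Sum.inl i), rfl, rfl⟩

lemma Bsu_mem_W1 (i : Fin (m+1)) : Bsu inc i ∈ W1 inc 2 :=
  Submodule.subset_span ⟨Sum.inr (Sum.inr i), rfl, rfl⟩

/-- the basis family of `M2` -/
def v2 : Fin m → M2 inc := CC inc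

lemma v2_indep : LinearIndependent k (v2 inc) := by
  apply LinearIndependent.of_comp ((M2 inc).subtype.restrictScalars k)
  rw [Fintype.linearIndependent_iff]
  intro g hg j
  have := congrFun hg j
  simp only [v2, CC, Finset.sum_apply, LinearMap.restrictScalars_apply, Submodule.subtype_apply, Submodule.coe_subtype, Function.comp_apply,
    AddSubmonoidClass.coe_finset_sum, SetLike.val_smul, Pi.smul_apply,
    Pi.single_apply, smul_ite, smul_zero, Finset.sum_ite_eq, Finset.mem_univ,
    if_true, Pi.zero_apply] at this
  exact single_indep inc (le_refl _) this

lemma v2_span : ⊤ ≤ Submodule.span k (Set.range (v2 inc)) := by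
  intro x _
  obtain ⟨c, rfl⟩ := M2_repr inc x
  exact Submodule.sum_mem _ fun j _ => Submodule.smul_mem _ _
    (Submodule.subset_span ⟨j, rfl⟩)

/-- the basis of `M2` -/
def basis2 : Module.Basis (Fin m) k (M2 inc) := Module.Basis.mk (v2_indep inc) (v2_span inc)

/-- the grading of `M2` -/
def W2 (d : ℕ) : Submodule k (M2 inc) :=
  Submodule.span k (v2 inc '' {j | (2 : ℕ) = d})

lemma W2_internal : DirectSum.IsInternal (fun d => (W2 inc d).toAddSubgroup) := by
  have h := internal_addSubgroup_of_basis (basis2 inc) (fun _ => 2)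
  have : ⇑(basis2 inc) = v2 inc := Module.Basis.coe_mk _ _
  rw [this] at h
  exact h

lemma CC_mem_W2 (j : Fin m) : CC inc j ∈ W2 inc 2 :=
  Submodule.subset_span ⟨j, rfl, rfl⟩

end Bases

section Maps

variable {k : Type} [Field k] {m : ℕ} {A : Type} [Ring A] [Algebra k A]
  (inc : IncAlg k (VD (m+1)) A)

lemma smul_single_val (a : A) {ι : Type} [DecidableEq ι] (j : ι) (v : A) :
    a • Pi.single (M := fun _ : ι => A) j v
      = Pi.single (M := fun _ : ι => A) j (a * v) := by
  funext j'
  rcases eq_or_ne j' j with rfl | h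
  · simp
  · simp [Pi.single_eq_of_ne h]

lemma e_smul_single (x y : VD (m+1)) (hxy : x ≤ y) {ι : Type} [DecidableEq ι]
    (j : ι) (z w : VD (m+1)) (hzw : z ≤ w) :
    inc.e x y • Pi.single (M := fun _ : ι => A) j (inc.e z w)
      = if y = z then Pi.single (M := fun _ : ι => A) j (inc.e x w) else 0 := by
  rw [smul_single_val, inc.e_mul _ _ _ _ hxy hzw]
  split
  · rfl
  · simp

lemma smul_M1_val (a : A) (X : M1 inc) :
    ((a • X : M1 inc) : (Fin (m+1) ⊕ Fin (m+1)) → A) = a • (X : _ → A) := rfl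

lemma smul_M2_val (a : A) (X : M2 inc) :
    ((a • X : M2 inc) : Fin m → A) = a • (X : _ → A) := rfl

lemma e_smul_Bs (x y : VD (m+1)) (h : x ≤ y) (i : Fin (m+1)) :
    inc.e x y • Bs inc i = if y = VD.s then Bs inc i else 0 := by
  apply Subtype.ext
  rw [apply_ite (Subtype.val)]
  show inc.e x y • (Pi.single (Sum.inl i) (inc.e VD.s VD.s) :
    (Fin (m+1) ⊕ Fin (m+1)) → A) = _
  rw [e_smul_single inc x y h _ _ _ (le_refl VD.s)]
  rcases eq_or_ne y VD.s with rfl | hy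
  · obtain rfl : x = VD.s := VD.le_s_iff.mp h
    simp [Bs]
  · simp [hy]

lemma e_smul_Bu (x y : VD (m+1)) (h : x ≤ y) (i : Fin (m+1)) :
    inc.e x y • Bu inc i = if y = VD.u i then
      (if x = VD.s then Bsu inc i else Bu inc i) else 0 := by
  apply Subtype.ext
  rw [apply_ite (Subtype.val), apply_ite (Subtype.val)]
  show inc.e x y • (Pi.single (Sum.inr i) (inc.e (VD.u i) (VD.u i)) :
    (Fin (m+1) ⊕ Fin (m+1)) → A) = _
  rw [e_smul_single inc x y h _ _ _ (le_refl _)]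
  rcases eq_or_ne y (VD.u i) with rfl | hy
  · rcases VD.le_u_iff.mp h with rfl | rfl
    · simp [Bsu]
    · simp [Bu, VD.u_le_u]
  · simp [hy]

lemma e_smul_Bsu (x y : VD (m+1)) (h : x ≤ y) (i : Fin (m+1)) :
    inc.e x y • Bsu inc i = if y = VD.s then Bsu inc i else 0 := by
  apply Subtype.ext
  rw [apply_ite (Subtype.val)]
  show inc.e x y • (Pi.single (Sum.inr i) (inc.e VD.s (VD.u i)) :
    (Fin (m+1) ⊕ Fin (m+1)) → A) = _
  rw [e_smul_single inc x y h _ _ _ (by simp)]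
  rcases eq_or_ne y VD.s with rfl | hy
  · obtain rfl : x = VD.s := VD.le_s_iff.mp h
    simp [Bsu]
  · simp [hy]

lemma e_smul_CC (x y : VD (m+1)) (h : x ≤ y) (j : Fin m) :
    inc.e x y • CC inc j = if y = VD.s then CC inc j else 0 := by
  apply Subtype.ext
  rw [apply_ite (Subtype.val)]
  show inc.e x y • (Pi.single j (inc.e VD.s VD.s) : Fin m → A) = _
  rw [e_smul_single inc x y h _ _ _ (le_refl VD.s)]
  rcases eq_or_ne y VD.s with rfl | hy
  · obtain rfl : x = VD.s := VD.le_s_iff.mp h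
    simp [CC]
  · simp [hy]

/-- the differential `M1 → A` -/
def f0 : M1 inc →ₗ[A] A where
  toFun x := ∑ i, (x : (Fin (m+1) ⊕ Fin (m+1)) → A) (Sum.inl i) * inc.e VD.s (VD.u i)
           + ∑ i, (x : (Fin (m+1) ⊕ Fin (m+1)) → A) (Sum.inr i) * inc.e (VD.u i) VD.t
  map_add' x y := by
    simp only [Submodule.coe_add, Pi.add_apply, add_mul, Finset.sum_add_distrib]
    abel
  map_smul' a x := by
    simp only [SetLike.val_smul, Pi.smul_apply, smul_eq_mul, mul_assoc,
      RingHom.id_apply, Finset.mul_sum, mul_add]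

lemma f0_Bs (i : Fin (m+1)) : f0 inc (Bs inc i) = inc.e VD.s (VD.u i) := by
  simp only [f0, LinearMap.coe_mk, AddHom.coe_mk, Bs, Pi.single_apply,
    ite_mul, zero_mul, Finset.sum_ite_eq, Finset.mem_univ, if_true,
    Sum.inl.injEq, Sum.inr.injEq, reduceCtorEq, if_false, Finset.sum_const_zero,
    add_zero]
  rw [Finset.sum_ite_eq' Finset.univ i, if_pos (Finset.mem_univ i),
    inc.e_mul _ _ _ _ (le_refl _) (by simp), if_pos rfl]

lemma f0_Bu (i : Fin (m+1)) : f0 inc (Bu inc i) = inc.e (VD.u i) VD.t := by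
  simp only [f0, LinearMap.coe_mk, AddHom.coe_mk, Bu, Pi.single_apply,
    ite_mul, zero_mul, Finset.sum_ite_eq, Finset.mem_univ, if_true,
    Sum.inl.injEq, Sum.inr.injEq, reduceCtorEq, if_false, Finset.sum_const_zero,
    zero_add]
  rw [Finset.sum_ite_eq' Finset.univ i, if_pos (Finset.mem_univ i),
    inc.e_mul _ _ _ _ (le_refl _) (by simp), if_pos rfl]

lemma f0_Bsu (i : Fin (m+1)) : f0 inc (Bsu inc i) = inc.e VD.s VD.t := by
  simp only [f0, LinearMap.coe_mk, AddHom.coe_mk, Bsu, Pi.single_apply,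
    ite_mul, zero_mul, Finset.sum_ite_eq, Finset.mem_univ, if_true,
    Sum.inl.injEq, Sum.inr.injEq, reduceCtorEq, if_false, Finset.sum_const_zero,
    zero_add]
  rw [Finset.sum_ite_eq' Finset.univ i, if_pos (Finset.mem_univ i),
    inc.e_mul _ _ _ _ (by simp) (by simp), if_pos rfl]

/-- the differential `M2 → M1` -/
def f1 : M2 inc →ₗ[A] M1 inc where
  toFun y := ∑ j, (y : Fin m → A) j • (Bsu inc j.succ - Bsu inc 0)
  map_add' y z := by
    simp only [Submodule.coe_add, Pi.add_apply, add_smul, Finset.sum_add_distrib]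
  map_smul' a y := by
    simp only [SetLike.val_smul, Pi.smul_apply, smul_eq_mul, mul_smul,
      RingHom.id_apply, Finset.smul_sum]

lemma f1_CC (j : Fin m) : f1 inc (CC inc j) = Bsu inc j.succ - Bsu inc 0 := by
  simp only [f1, LinearMap.coe_mk, AddHom.coe_mk, CC, Pi.single_apply,
    ite_smul, zero_smul, Finset.sum_ite_eq, Finset.mem_univ, if_true]
  have := e_smul_Bsu inc VD.s VD.s (le_refl _) j.succ
  rw [if_pos rfl] at this
  have h0 := e_smul_Bsu inc VD.s VD.s (le_refl _) 0
  rw [if_pos rfl] at h0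
  rw [Finset.sum_ite_eq' Finset.univ j, if_pos (Finset.mem_univ j), smul_sub, this, h0]

lemma mem_Ls_mul_e {w : A} (h : w ∈ Ls inc) : w * inc.e VD.s VD.s = w := by
  obtain ⟨c, rfl⟩ := (mem_Ls_iff inc).mp h
  rw [smul_mul_assoc, inc.e_mul _ _ _ _ (le_refl _) (le_refl _), if_pos rfl]

lemma mem_Lu_mul_e {w : A} {i : Fin (m+1)} (h : w ∈ Lu inc i) :
    w * inc.e (VD.u i) (VD.u i) = w := by
  obtain ⟨c, d, rfl⟩ := (mem_Lu_iff inc).mp h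
  rw [add_mul, smul_mul_assoc, smul_mul_assoc,
    inc.e_mul _ _ _ _ (le_refl _) (le_refl _), if_pos rfl,
    inc.e_mul _ _ _ _ (by simp) (le_refl _), if_pos rfl]

/-- the splitting of the inclusion of `M1` -/
def retr1 : ((Fin (m+1) ⊕ Fin (m+1)) → A) →ₗ[A] M1 inc where
  toFun v := ⟨fun j => Sum.elim (fun i => v (Sum.inl i) * inc.e VD.s VD.s)
      (fun i => v (Sum.inr i) * inc.e (VD.u i) (VD.u i)) j, by
    intro j _
    rcases j with i | i
    · exact mul_e_ss_mem_Ls inc _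
    · exact mul_e_uu_mem_Lu inc _ i⟩
  map_add' v w := by
    apply Subtype.ext
    funext j
    rcases j with i | i <;> simp [add_mul]
  map_smul' a v := by
    apply Subtype.ext
    funext j
    rcases j with i | i <;> simp [mul_assoc]

lemma proj_M1 : Module.Projective A (M1 inc) := by
  refine Module.Projective.of_split (M1 inc).subtype (retr1 inc)
    (LinearMap.ext fun x => Subtype.ext (funext fun j => ?_))
  rcases j with i | i
  · exact mem_Ls_mul_e inc (Submodule.mem_pi.mp x.2 (Sum.inl i) trivial)
  · exact mem_Lu_mul_e inc (Submodule.mem_pi.mp x.2 (Sum.inr i) trivial)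

/-- the splitting of the inclusion of `M2` -/
def retr2 : (Fin m → A) →ₗ[A] M2 inc where
  toFun v := ⟨fun j => v j * inc.e VD.s VD.s, by
    intro j _
    exact mul_e_ss_mem_Ls inc _⟩
  map_add' v w := by
    apply Subtype.ext
    funext j
    simp [add_mul]
  map_smul' a v := by
    apply Subtype.ext
    funext j
    simp [mul_assoc]

lemma proj_M2 : Module.Projective A (M2 inc) := by
  refine Module.Projective.of_split (M2 inc).subtype (retr2 inc)
    (LinearMap.ext fun x => Subtype.ext (funext fun j => ?_))
  exact mem_Ls_mul_e inc (Submodule.mem_pi.mp x.2 j trivial)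

end Maps

section GradedModules

variable {k : Type} [Field k] {m : ℕ} {A : Type} [Ring A] [Algebra k A]
  {inc : IncAlg k (VD (m+1)) A} {ρ : VD (m+1) → VD (m+1) → ℕ}
  {GA : GRing (VD (m+1) → k) A} (hGA : IncGrading inc ρ GA) (hρ : LengthFn ρ)

include hGA hρ

lemma W1_smul {p d : ℕ} {a : A} {X : M1 inc} (ha : a ∈ GA.deg p)
    (hX : X ∈ W1 inc d) : a • X ∈ W1 inc (p + d) := by
  induction hX using Submodule.span_induction with
  | mem X hXmem =>
    obtain ⟨j, hj, rfl⟩ := hXmem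
    have ha' := (mem_deg_iff hGA).mp ha
    clear ha
    induction ha' using Submodule.span_induction with
    | mem w hw =>
      obtain ⟨x, y, hxy, hrho, rfl⟩ := hw
      rcases j with i | i | i
      · have hd : d = 1 := hj.symm
        subst hd
        show inc.e x y • Bs inc i ∈ _
        rw [e_smul_Bs inc x y hxy]
        split
        · rename_i hy
          subst hy
          obtain rfl : x = VD.s := VD.le_s_iff.mp hxy
          have hp : p = 0 := by rw [← hrho, VD.rho_refl hρ]
          subst hp
          simpa using Bs_mem_W1 inc i
        · exact Submodule.zero_mem _
      · have hd : d = 1 := hj.symm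
        subst hd
        show inc.e x y • Bu inc i ∈ _
        rw [e_smul_Bu inc x y hxy]
        split
        · rename_i hy
          subst hy
          split
          · rename_i hx
            subst hx
            have hp : p = 1 := by rw [← hrho, VD.rho_s_u hρ]
            subst hp
            simpa using Bsu_mem_W1 inc i
          · rename_i hx
            obtain rfl : x = VD.u i := (VD.le_u_iff.mp hxy).resolve_left hx
            have hp : p = 0 := by rw [← hrho, VD.rho_refl hρ]
            subst hp
            simpa using Bu_mem_W1 inc i
        · exact Submodule.zero_mem _
      · have hd : d = 2 := hj.symm
        subst hd
        show inc.e x y • Bsu inc i ∈ _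
        rw [e_smul_Bsu inc x y hxy]
        split
        · rename_i hy
          subst hy
          obtain rfl : x = VD.s := VD.le_s_iff.mp hxy
          have hp : p = 0 := by rw [← hrho, VD.rho_refl hρ]
          subst hp
          simpa using Bsu_mem_W1 inc i
        · exact Submodule.zero_mem _
    | zero => rw [zero_smul]; exact Submodule.zero_mem _
    | add w₁ w₂ _ _ ih₁ ih₂ =>
      rw [add_smul]; exact Submodule.add_mem _ ih₁ ih₂
    | smul c w _ ih =>
      rw [smul_assoc]; exact Submodule.smul_mem _ _ ih
  | zero => rw [smul_zero]; exact Submodule.zero_mem _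
  | add X Y _ _ ihX ihY => rw [smul_add]; exact Submodule.add_mem _ ihX ihY
  | smul c X _ ih => rw [smul_comm]; exact Submodule.smul_mem _ _ ih

lemma W2_smul {p d : ℕ} {a : A} {X : M2 inc} (ha : a ∈ GA.deg p)
    (hX : X ∈ W2 inc d) : a • X ∈ W2 inc (p + d) := by
  induction hX using Submodule.span_induction with
  | mem X hXmem =>
    obtain ⟨j, hj, rfl⟩ := hXmem
    have hd : d = 2 := hj.symm
    subst hd
    have ha' := (mem_deg_iff hGA).mp ha
    clear ha
    induction ha' using Submodule.span_induction with
    | mem w hw =>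
      obtain ⟨x, y, hxy, hrho, rfl⟩ := hw
      show inc.e x y • CC inc j ∈ _
      rw [e_smul_CC inc x y hxy]
      split
      · rename_i hy
        subst hy
        obtain rfl : x = VD.s := VD.le_s_iff.mp hxy
        have hp : p = 0 := by rw [← hrho, VD.rho_refl hρ]
        subst hp
        simpa using CC_mem_W2 inc j
      · exact Submodule.zero_mem _
    | zero => rw [zero_smul]; exact Submodule.zero_mem _
    | add w₁ w₂ _ _ ih₁ ih₂ =>
      rw [add_smul]; exact Submodule.add_mem _ ih₁ ih₂
    | smul c w _ ih =>
      rw [smul_assoc]; exact Submodule.smul_mem _ _ ih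
  | zero => rw [smul_zero]; exact Submodule.zero_mem _
  | add X Y _ _ ihX ihY => rw [smul_add]; exact Submodule.add_mem _ ihX ihY
  | smul c X _ ih => rw [smul_comm]; exact Submodule.smul_mem _ _ ih

lemma f0_graded {d : ℕ} {X : M1 inc} (hX : X ∈ W1 inc d) :
    f0 inc X ∈ GA.deg d := by
  induction hX using Submodule.span_induction with
  | mem X hXmem =>
    obtain ⟨j, hj, rfl⟩ := hXmem
    rcases j with i | i | i
    · have hd : d = 1 := hj.symm
      subst hd
      show f0 inc (Bs inc i) ∈ _
      rw [f0_Bs]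
      have := E_mem_deg hGA (show VD.s ≤ VD.u i by simp)
      rwa [VD.rho_s_u hρ] at this
    · have hd : d = 1 := hj.symm
      subst hd
      show f0 inc (Bu inc i) ∈ _
      rw [f0_Bu]
      have := E_mem_deg hGA (show VD.u i ≤ VD.t by simp)
      rwa [VD.rho_u_t hρ] at this
    · have hd : d = 2 := hj.symm
      subst hd
      show f0 inc (Bsu inc i) ∈ _
      rw [f0_Bsu]
      have := E_mem_deg hGA (show VD.s ≤ VD.t by simp)
      rwa [VD.rho_s_t hρ (Nat.succ_pos m)] at this
  | zero => rw [map_zero]; exact AddSubgroup.zero_mem _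
  | add X Y _ _ ihX ihY => rw [map_add]; exact AddSubgroup.add_mem _ ihX ihY
  | smul c X _ ih =>
    rw [LinearMap.map_smul_of_tower]
    exact deg_smul_mem hGA ih

end GradedModules

section Exactness

variable {k : Type} [Field k] {m : ℕ} {A : Type} [Ring A] [Algebra k A]
  (inc : IncAlg k (VD (m+1)) A)

lemma f1_graded {d : ℕ} {X : M2 inc} (hX : X ∈ W2 inc d) :
    f1 inc X ∈ W1 inc d := by
  induction hX using Submodule.span_induction with
  | mem X hXmem =>
    obtain ⟨j, hj, rfl⟩ := hXmem
    have hd : d = 2 := hj.symm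
    subst hd
    show f1 inc (CC inc j) ∈ _
    rw [f1_CC]
    exact Submodule.sub_mem _ (Bsu_mem_W1 inc _) (Bsu_mem_W1 inc _)
  | zero => rw [map_zero]; exact Submodule.zero_mem _
  | add X Y _ _ ihX ihY => rw [map_add]; exact Submodule.add_mem _ ihX ihY
  | smul c X _ ih =>
    rw [LinearMap.map_smul_of_tower]
    exact Submodule.smul_mem _ _ ih

lemma f0_f1 (Y : M2 inc) : f0 inc (f1 inc Y) = 0 := by
  have : f1 inc Y = ∑ j, (Y : Fin m → A) j • (Bsu inc j.succ - Bsu inc 0) := rfl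
  rw [this, map_sum]
  refine Finset.sum_eq_zero fun j _ => ?_
  rw [map_smul, map_sub, f0_Bsu, f0_Bsu, sub_self, smul_zero]

lemma f0_decomp (c c' d : Fin (m+1) → k) :
    f0 inc (∑ i, c i • Bs inc i + ∑ i, c' i • Bu inc i + ∑ i, d i • Bsu inc i)
      = ∑ i, c i • inc.e VD.s (VD.u i) + ∑ i, c' i • inc.e (VD.u i) VD.t
        + (∑ i, d i) • inc.e VD.s VD.t := by
  rw [map_add, map_add, map_sum, map_sum, map_sum, Finset.sum_smul]
  congr 1
  · congr 1
    · exact Finset.sum_congr rfl fun i _ => by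
        rw [LinearMap.map_smul_of_tower, f0_Bs]
    · exact Finset.sum_congr rfl fun i _ => by
        rw [LinearMap.map_smul_of_tower, f0_Bu]
  · exact Finset.sum_congr rfl fun i _ => by
      rw [LinearMap.map_smul_of_tower, f0_Bsu]

/-- injectivity of coefficients for the image of `f0` -/
lemma f0_coeffs_zero {c c' d : Fin (m+1) → k}
    (h : ∑ i, c i • inc.e VD.s (VD.u i) + ∑ i, c' i • inc.e (VD.u i) VD.t
        + (∑ i, d i) • inc.e VD.s VD.t = 0) :
    (∀ i, c i = 0) ∧ (∀ i, c' i = 0) ∧ (∑ i, d i) = 0 := by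
  have hp : Function.Injective (fun j : (Fin (m+1) ⊕ Fin (m+1)) ⊕ Unit => Sum.elim
      (Sum.elim (fun i => (⟨(VD.s, VD.u i), by simp⟩ : Pairs (m+1)))
        (fun i => ⟨(VD.u i, VD.t), by simp⟩))
      (fun _ => ⟨(VD.s, VD.t), by simp⟩) j) := by
    rintro ((j1 | j1) | j1) ((j2 | j2) | j2) hj <;>
      simp only [Sum.elim_inl, Sum.elim_inr, Subtype.ext_iff, Prod.ext_iff] at hj <;>
      simp_all
  have := indep_fam inc _ hp
    (c := Sum.elim (Sum.elim c c') (fun _ => ∑ i, d i)) (by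
      rw [Fintype.sum_sum_type, Fintype.sum_sum_type]
      simpa using h)
  exact ⟨fun i => this (Sum.inl (Sum.inl i)), fun i => this (Sum.inl (Sum.inr i)),
    this (Sum.inr ())⟩

lemma Bsu_indep : LinearIndependent k (fun i : Fin (m+1) => Bsu inc i) := by
  have h := (v1_indep inc).comp
    (fun i : Fin (m+1) => (Sum.inr (Sum.inr i) : Iota1 m))
    (fun a b hab => by simpa using hab)
  exact h

lemma f1_apply_sum (c : Fin m → k) :
    f1 inc (∑ j, c j • CC inc j)
      = ∑ j, c j • Bsu inc (Fin.succ j) - (∑ j, c j) • Bsu inc 0 := by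
  rw [map_sum]
  rw [show (∑ j, (f1 inc) (c j • CC inc j))
      = ∑ j, (c j • Bsu inc (Fin.succ j) - c j • Bsu inc 0) from
    Finset.sum_congr rfl fun j _ => by
      rw [LinearMap.map_smul_of_tower, f1_CC, smul_sub]]
  rw [Finset.sum_sub_distrib, Finset.sum_smul]

lemma f1_ker {Y : M2 inc} (hY : f1 inc Y = 0) : Y = 0 := by
  obtain ⟨c, rfl⟩ := M2_repr inc Y
  rw [f1_apply_sum] at hY
  have hcomb : ∑ i : Fin (m+1),
      (Fin.cases (-(∑ j, c j)) c : ∀ _ : Fin (m+1), k) i • Bsu inc i = 0 := by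
    rw [Fin.sum_univ_succ]
    simp only [Fin.cases_zero, Fin.cases_succ]
    rw [sub_eq_zero] at hY
    rw [hY, ← add_smul, neg_add_cancel, zero_smul]
  have hz := Fintype.linearIndependent_iff.mp (Bsu_indep inc) _ hcomb
  have hc : ∀ j, c j = 0 := fun j => by
    have := hz (Fin.succ j)
    rwa [Fin.cases_succ] at this
  rw [Finset.sum_congr rfl fun j _ => by rw [hc j, zero_smul],
    Finset.sum_const_zero]

lemma exact_f1 {X : M1 inc} (hX : f0 inc X = 0) :
    ∃ Y : M2 inc, f1 inc Y = X := by
  obtain ⟨c, c', d, rfl⟩ := M1_repr inc X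
  rw [f0_decomp] at hX
  obtain ⟨hc, hc', hd⟩ := f0_coeffs_zero inc hX
  refine ⟨∑ j : Fin m, d (Fin.succ j) • CC inc j, ?_⟩
  rw [f1_apply_sum]
  simp only [hc, hc', zero_smul, Finset.sum_const_zero, zero_add]
  rw [Fin.sum_univ_succ] at hd
  have hd0 : d 0 = -(∑ j : Fin m, d (Fin.succ j)) :=
    eq_neg_of_add_eq_zero_left hd
  rw [Fin.sum_univ_succ (f := fun i => d i • Bsu inc i), hd0,
    show ((-(∑ j : Fin m, d (Fin.succ j))) • Bsu inc 0 : M1 inc)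
      = -((∑ j : Fin m, d (Fin.succ j)) • Bsu inc 0) by exact neg_smul (M := M1 inc) (∑ j : Fin m, d (Fin.succ j)) (Bsu inc 0)]
  abel

end Exactness

section Final

variable {k : Type} [Field k] {m : ℕ} {A : Type} [Ring A] [Algebra k A]
  {inc : IncAlg k (VD (m+1)) A} {ρ : VD (m+1) → VD (m+1) → ℕ}
  {GA : GRing (VD (m+1) → k) A} (hGA : IncGrading inc ρ GA)

include hGA

lemma aug_e_offdiag {x y : VD (m+1)} (h : x ≤ y) (hne : x ≠ y) :
    GA.aug (inc.e x y) = 0 := by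
  rw [hGA.aug_eq x y h, if_neg hne]

lemma aug_f0 (X : M1 inc) : GA.aug (f0 inc X) = 0 := by
  obtain ⟨c, c', d, rfl⟩ := M1_repr inc X
  rw [f0_decomp, map_add, map_add, map_sum, map_sum]
  rw [aug_smul hGA, aug_e_offdiag hGA (by simp) (by simp), smul_zero]
  rw [Finset.sum_eq_zero fun i (_ : i ∈ Finset.univ) => by
    rw [aug_smul hGA, aug_e_offdiag hGA (VD.s_le _) (by simp), smul_zero]]
  rw [Finset.sum_eq_zero fun i (_ : i ∈ Finset.univ) => by
    rw [aug_smul hGA, aug_e_offdiag hGA (VD.le_t _) (by simp), smul_zero]]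
  simp

lemma exact_f0 {a : A} (ha : GA.aug a = 0) : ∃ X : M1 inc, f0 inc X = a := by
  have hS : a ∈ SOff inc := aug_eq_zero_mem_SOff hGA ha
  have hle : SOff inc ≤ (LinearMap.range (f0 inc)).restrictScalars k := by
    rw [SOff, Submodule.span_le]
    rintro w ⟨x, y, hxy, hne, rfl⟩
    rcases x with _ | i | _ <;> rcases y with _ | j | _
    · exact absurd rfl hne
    · exact ⟨Bs inc j, f0_Bs inc j⟩
    · exact ⟨Bsu inc 0, f0_Bsu inc 0⟩
    · exact absurd hxy (by simp)
    · exact absurd (congrArg VD.u (VD.u_le_u.mp hxy)) hne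
    · exact ⟨Bu inc i, f0_Bu inc i⟩
    · exact absurd hxy (by simp)
    · exact absurd hxy (by simp)
    · exact absurd rfl hne
  exact hle hS

lemma gen_A (hρ : LengthFn ρ) (a : A) :
    a ∈ AddSubgroup.closure {z : A | ∃ b : A, ∃ y ∈ GA.deg 0, z = b • y} :=
  AddSubgroup.subset_closure ⟨a, 1, one_mem_deg0 hGA hρ, (mul_one a).symm⟩

end Final

section Gen

variable {k : Type} [Field k] {m : ℕ} {A : Type} [Ring A] [Algebra k A]
  (inc : IncAlg k (VD (m+1)) A)

lemma gen_M1 (X : M1 inc) : X ∈ AddSubgroup.closure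
    {z : M1 inc | ∃ a : A, ∃ y ∈ (W1 inc 1).toAddSubgroup, z = a • y} := by
  obtain ⟨c, c', d, rfl⟩ := M1_repr inc X
  refine AddSubgroup.add_mem _ (AddSubgroup.add_mem _ ?_ ?_) ?_ <;>
    refine AddSubgroup.sum_mem _ fun i _ => AddSubgroup.subset_closure ?_
  · exact ⟨algebraMap k A (c i), Bs inc i, Bs_mem_W1 inc i,
      (algebraMap_smul A (c i) _).symm⟩
  · exact ⟨algebraMap k A (c' i), Bu inc i, Bu_mem_W1 inc i,
      (algebraMap_smul A (c' i) _).symm⟩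
  · refine ⟨algebraMap k A (d i) * inc.e VD.s (VD.u i), Bu inc i,
      Bu_mem_W1 inc i, ?_⟩
    have h1 : inc.e VD.s (VD.u i) • Bu inc i = Bsu inc i := by
      rw [e_smul_Bu inc _ _ (by simp) i]
      simp
    rw [mul_smul, h1, algebraMap_smul]

lemma gen_M2 (Y : M2 inc) : Y ∈ AddSubgroup.closure
    {z : M2 inc | ∃ a : A, ∃ y ∈ (W2 inc 2).toAddSubgroup, z = a • y} := by
  obtain ⟨c, rfl⟩ := M2_repr inc Y
  refine AddSubgroup.sum_mem _ fun j _ => AddSubgroup.subset_closure ?_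
  exact ⟨algebraMap k A (c j), CC inc j, CC_mem_W2 inc j,
    (algebraMap_smul A (c j) _).symm⟩

end Gen

lemma internal_punit : DirectSum.IsInternal (fun _ : ℕ => (⊥ : AddSubgroup PUnit)) :=
  ⟨fun a b _ => Subsingleton.elim a b,
  fun x => ⟨(inferInstance : Inhabited _).default, Subsingleton.elim _ _⟩⟩

/-- For every `n ≥ 1`, the incidence ring of the nested vertical
diamonds poset `{s, u_1, …, u_n, t}` (with `s < u_i < t` for all `i = 1, …, n` and
the `u_i` pairwise incomparable) is a Koszul `R`-ring. -/
theorem vertical_diamonds_koszul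
    (k : Type) [Field k] (n : ℕ) (hn : 1 ≤ n)
    (ρ : VD n → VD n → ℕ) (hρ : LengthFn ρ)
    (A : Type) [Ring A] [Algebra k A] (inc : IncAlg k (VD n) A)
    (GA : GRing (VD n → k) A) (hGA : IncGrading inc ρ GA) :
    GA.IsKoszul := by
  obtain ⟨m, rfl⟩ : ∃ m, n = m + 1 := ⟨n - 1, by omega⟩
  refine ⟨?_⟩
  refine
  { P := fun nn => match nn with
      | 0 => A | 1 => M1 inc | 2 => M2 inc | _+3 => PUnit
    acg := fun nn => match nn with
      | 0 => inferInstanceAs (AddCommGroup A)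
      | 1 => inferInstanceAs (AddCommGroup (M1 inc))
      | 2 => inferInstanceAs (AddCommGroup (M2 inc))
      | _+3 => inferInstanceAs (AddCommGroup PUnit)
    mod := fun nn => match nn with
      | 0 => inferInstanceAs (Module A A)
      | 1 => inferInstanceAs (Module A (M1 inc))
      | 2 => inferInstanceAs (Module A (M2 inc))
      | _+3 => inferInstanceAs (Module A PUnit)
    proj := fun nn => match nn with
      | 0 => inferInstanceAs (Module.Projective A A)
      | 1 => proj_M1 inc
      | 2 => proj_M2 inc
      | _+3 => inferInstanceAs (Module.Projective A PUnit)
    g := fun nn => match nn with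
      | 0 => GA.deg
      | 1 => fun d => (W1 inc d).toAddSubgroup
      | 2 => fun d => (W2 inc d).toAddSubgroup
      | _+3 => fun _ => ⊥
    internal := fun nn => match nn with
      | 0 => GA.internal
      | 1 => W1_internal inc
      | 2 => W2_internal inc
      | _+3 => internal_punit
    smul_mem := fun nn => match nn with
      | 0 => fun hp hx => by
          simpa [smul_eq_mul] using GA.mul_mem hp hx
      | 1 => fun hp hx => W1_smul hGA hρ hp hx
      | 2 => fun hp hx => W2_smul hGA hρ hp hx
      | _+3 => fun _ hx => by
          rw [AddSubgroup.mem_bot.mp hx, smul_zero]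
          exact AddSubgroup.zero_mem _
    f := fun nn => match nn with
      | 0 => (f0 inc).toAddMonoidHom
      | 1 => (f1 inc).toAddMonoidHom
      | 2 => 0
      | _+3 => 0
    f_linear := fun nn => match nn with
      | 0 => fun a x => (f0 inc).map_smul a x
      | 1 => fun a x => (f1 inc).map_smul a x
      | 2 => fun a x => (smul_zero a).symm
      | _+3 => fun a x => Subsingleton.elim _ _
    f_graded := fun nn => match nn with
      | 0 => fun d x hx => f0_graded hGA hρ hx
      | 1 => fun d x hx => f1_graded inc hx
      | 2 => fun d x _ => AddSubgroup.zero_mem _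
      | _+3 => fun d x _ => AddSubgroup.zero_mem _
    eps := GA.aug.toAddMonoidHom
    eps_linear := fun a x => by
      show GA.aug (a * x) = GA.aug a * GA.aug x
      exact map_mul GA.aug a x
    eps_surj := fun r => ⟨GA.emb r, GA.aug_emb r⟩
    eps_graded := fun d x hx => GA.aug_deg d x hx
    comp0 := fun x => aug_f0 hGA x
    exact0 := fun x hx => by
      obtain ⟨X, hX⟩ := exact_f0 hGA hx
      exact ⟨X, hX⟩
    comp := fun nn => match nn with
      | 0 => fun x => f0_f1 inc x
      | 1 => fun x => map_zero ((f1 inc).toAddMonoidHom)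
      | 2 => fun x => rfl
      | nn+3 => fun x => rfl
    exact := fun nn => match nn with
      | 0 => fun x hx => by
          obtain ⟨Y, hY⟩ := exact_f1 inc hx
          exact ⟨Y, hY⟩
      | 1 => fun x hx => ⟨PUnit.unit, (f1_ker inc hx).symm⟩
      | 2 => fun x _ => ⟨PUnit.unit, Subsingleton.elim _ _⟩
      | nn+3 => fun x _ => ⟨PUnit.unit, Subsingleton.elim _ _⟩
    gen := fun nn => match nn with
      | 0 => fun x => gen_A hGA hρ x
      | 1 => fun x => gen_M1 inc x
      | 2 => fun x => gen_M2 inc x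
      | _+3 => fun x => by
          rw [Subsingleton.elim x 0]
          exact AddSubgroup.zero_mem _ }

end P1605
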